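/- If λ ∈ Y₊ then t_λ is the unique element of minimal length in the coset t_λ W_f; if λ ∈ −Y₊₊ then t_λ w∘ is the unique element of minimal length in the coset t_λ W_f (where w∘ is the longest element of W_f). -/

import Mathlib

open scoped Classical TensorProduct

noncomputable section

namespace SemiInf

/-- The data of a root datum together with its (finite) Weyl group:
finite-rank free `ℤ`-modules `X` and `Y` with a pairing, a finite group `W`
acting on both, a finite set of roots with a subset of positive roots, and a
coroot map. The axioms are collected in `Ctx.IsRootDatum`. -/
structure Ctx where
  X : Type
  Y : Type
  [addX : AddCommGroup X]
  [addY : AddCommGroup Y]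
  W : Type
  [grpW : Group W]
  [finW : Fintype W]
  [actX : DistribMulAction W X]
  [actY : DistribMulAction W Y]
  pair : Y →+ X →+ ℤ
  roots : Finset X
  pos : Finset X
  coroot : X → Y

attribute [instance] Ctx.addX Ctx.addY Ctx.grpW Ctx.finW Ctx.actX Ctx.actY

namespace Ctx

variable (C : Ctx)

/-- The axioms of a root datum (free finite-rank lattices, perfect pairing,
finite reduced crystallographic root system with a system of positive roots),
with `W` its Weyl group acting faithfully on `X` and `Y`. -/
structure IsRootDatum : Prop where
  free_X : Module.Free ℤ C.X
  finite_X : Module.Finite ℤ C.X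
  free_Y : Module.Free ℤ C.Y
  finite_Y : Module.Finite ℤ C.Y
  perfect_left : Function.Bijective fun y : C.Y => C.pair y
  perfect_right : Function.Bijective fun x : C.X => C.pair.flip x
  pos_subset : C.pos ⊆ C.roots
  root_decomp : ∀ α ∈ C.roots, α ∈ C.pos ∨ -α ∈ C.pos
  pos_neg_disjoint : ∀ α ∈ C.pos, -α ∉ C.pos
  zero_not_root : (0 : C.X) ∉ C.roots
  reduced : ∀ α ∈ C.roots, ∀ n : ℤ, n • α ∈ C.roots → n = 1 ∨ n = -1
  coroot_self : ∀ α ∈ C.roots, C.pair (C.coroot α) α = 2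
  isReflection : ∀ α ∈ C.roots, ∃ s : C.W,
    (∀ x : C.X, s • x = x - C.pair (C.coroot α) x • α) ∧
    (∀ y : C.Y, s • y = y - C.pair y α • C.coroot α)
  weyl_gen : ∀ w : C.W, w ∈ Subgroup.closure {s : C.W | ∃ α ∈ C.roots,
    (∀ x : C.X, s • x = x - C.pair (C.coroot α) x • α) ∧
    (∀ y : C.Y, s • y = y - C.pair y α • C.coroot α)}
  faithful_X : ∀ w : C.W, (∀ x : C.X, w • x = x) → w = 1
  faithful_Y : ∀ w : C.W, (∀ y : C.Y, w • y = y) → w = 1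
  pair_inv : ∀ (w : C.W) (y : C.Y) (x : C.X), C.pair (w • y) (w • x) = C.pair y x
  roots_stable : ∀ (w : C.W), ∀ α ∈ C.roots, w • α ∈ C.roots
  smul_coroot : ∀ (w : C.W), ∀ α ∈ C.roots, w • C.coroot α = C.coroot (w • α)
  exists_regular_X : ∃ ξ : C.X, ∀ α ∈ C.pos, 0 < C.pair (C.coroot α) ξ
  exists_regular_Y : ∃ η : C.Y, ∀ α ∈ C.pos, 0 < C.pair η α

/-- The length function of the finite Weyl group:
`ℓ(w) = #{α ∈ 𝔯₊ : w(α) ∈ −𝔯₊}`. -/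
def lenW (w : C.W) : ℕ := (C.pos.filter fun α => -(w • α) ∈ C.pos).card

/-- `w` is the longest element of the finite Weyl group iff it maps every
positive root to a negative root. -/
def IsLongest (w : C.W) : Prop := ∀ α ∈ C.pos, -(w • α) ∈ C.pos

/-- The set `Y₊` of dominant cocharacters. -/
def Ypos : Set C.Y := {l | ∀ α ∈ C.pos, 0 ≤ C.pair l α}

/-- The set `Y₊₊` of strictly dominant cocharacters. -/
def Yppos : Set C.Y := {l | ∀ α ∈ C.pos, 0 < C.pair l α}

/-- The action of `W` on `Multiplicative Y`, as a homomorphism to `MulAut`. -/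
def φext : C.W →* MulAut (Multiplicative C.Y) where
  toFun w :=
    { toFun := fun y => Multiplicative.ofAdd (w • Multiplicative.toAdd y)
      invFun := fun y => Multiplicative.ofAdd (w⁻¹ • Multiplicative.toAdd y)
      left_inv := fun y => by simp
      right_inv := fun y => by simp
      map_mul' := fun a b => by simp [smul_add] }
  map_one' := by
    apply MulEquiv.ext
    intro y
    simp
  map_mul' w₁ w₂ := by
    apply MulEquiv.ext
    intro y
    simp [mul_smul]

/-- The extended affine Weyl group `W_ext = W_f ⋉ Y`. -/
abbrev Wext : Type := Multiplicative C.Y ⋊[C.φext] C.W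

/-- The translation element `t_λ ∈ W_ext` associated with `λ ∈ Y`. -/
def t (l : C.Y) : C.Wext := SemidirectProduct.inl (Multiplicative.ofAdd l)

/-- The canonical embedding of the finite Weyl group in `W_ext`. -/
def σ (w : C.W) : C.Wext := SemidirectProduct.inr w

/-- The length function on `W_ext`, defined by
`ℓ(w t_λ) = Σ_{α ∈ 𝔯₊, w(α) ∈ 𝔯₊} |⟨λ,α⟩| + Σ_{α ∈ 𝔯₊, w(α) ∈ −𝔯₊} |1 − ⟨λ,α⟩|`
(an element `g` of the semidirect product equals `w t_λ` for `w = g.right`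
and `λ = w⁻¹ • g.left`). -/
def len (g : C.Wext) : ℕ :=
  ∑ α ∈ C.pos,
    if g.right • α ∈ C.pos
      then (C.pair (g.right⁻¹ • Multiplicative.toAdd g.left) α).natAbs
      else ((1 : ℤ) - C.pair (g.right⁻¹ • Multiplicative.toAdd g.left) α).natAbs

/-- The coroot lattice `ℤ𝔯∨ ⊆ Y`. -/
def corootLattice : AddSubgroup C.Y := AddSubgroup.closure (C.coroot '' ↑C.roots)

/-- The affine Weyl group `W_aff = W_f ⋉ ℤ𝔯∨`, as a subgroup of `W_ext`. -/
def Waff : Subgroup C.Wext :=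
  Subgroup.closure ((fun l => C.t l) '' ↑C.corootLattice ∪ Set.range C.σ)

/-- The set of elements of length `1` of `W_aff` (the simple affine
reflections). -/
def Saff : Set C.Wext := {g | g ∈ C.Waff ∧ C.len g = 1}

/-- The set `Ω` of elements of length `0` of `W_ext`. -/
def OmegaSet : Set C.Wext := {g | C.len g = 0}

/-- The Bruhat order on `W_aff`: `u ≤ v` iff some reduced expression of `v`
(as a word in `S_aff`) admits a subword which is an expression of `u`. -/
def bruhatAff (u v : C.Wext) : Prop :=
  ∃ l : List C.Wext, (∀ s ∈ l, s ∈ C.Saff) ∧ l.prod = v ∧ l.length = C.len v ∧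
    ∃ l' : List C.Wext, l'.Sublist l ∧ l'.prod = u

/-- The Bruhat order on `W_ext`, extending the Bruhat order of `W_aff` by
`ω u ≤ ω' v` iff `ω = ω'` and `u ≤ v`, for `ω, ω' ∈ Ω` and `u, v ∈ W_aff`. -/
def bruhat (x y : C.Wext) : Prop :=
  ∃ ω u v : C.Wext, ω ∈ C.OmegaSet ∧ u ∈ C.Waff ∧ v ∈ C.Waff ∧
    x = ω * u ∧ y = ω * v ∧ C.bruhatAff u v

/-- The set `W_ext⁺` of `w ∈ W_ext` such that `ℓ(t_μ w) = ℓ(t_μ) + ℓ(w)` for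
every dominant `μ`. -/
def WextPlus : Set C.Wext :=
  {w | ∀ μ ∈ C.Ypos, C.len (C.t μ * w) = C.len (C.t μ) + C.len w}

/-- The semiinfinite order on `W_ext`. -/
def siLE (w y : C.Wext) : Prop :=
  ∃ μ : C.Y, C.t μ * w ∈ C.WextPlus ∧ C.t μ * y ∈ C.WextPlus ∧
    C.bruhat (C.t μ * w) (C.t μ * y)

/-- The rational vector space `ℚ ⊗ Y`. -/
abbrev QY : Type := ℚ ⊗[ℤ] C.Y

/-- The canonical map `Y → ℚ ⊗ Y`. -/
def ι : C.Y →ₗ[ℤ] C.QY := TensorProduct.mk ℤ ℚ C.Y 1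

/-- The finite set of positive coroots. -/
def posCoroots : Finset C.Y := C.pos.image C.coroot

/-- Half the sum of the positive coroots, as an element of `ℚ ⊗ Y`. -/
def rhoCheck : C.QY := (2⁻¹ : ℚ) ⊗ₜ[ℤ] (∑ β ∈ C.posCoroots, β)

/-- The set of Kostant partitions of `v ∈ ℚ ⊗ Y`: functions
`φ : 𝔯∨₊ → ℤ≥0` with `Σ_α φ(α)·α = v`. -/
def KostantSet (v : C.QY) : Set (↥C.posCoroots → ℕ) :=
  {φ | ∑ β : ↥C.posCoroots, (φ β) • C.ι (β : C.Y) = v}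

/-- Kostant's partition function. -/
def KostantP (v : C.QY) : ℕ := (C.KostantSet v).ncard

/-- The action of `w ∈ W` on `ℚ ⊗ Y`. -/
def actQ (w : C.W) : C.QY →ₗ[ℤ] C.QY :=
  LinearMap.lTensor ℚ ((DistribMulAction.toAddMonoidHom C.Y w).toIntLinearMap)

/-- The simple roots: positive roots which are not sums of two positive
roots. -/
def simpleRoots : Finset C.X :=
  C.pos.filter fun α => ¬ ∃ β ∈ C.pos, ∃ γ ∈ C.pos, α = β + γ

end Ctx

end SemiInf


namespace SemiInfAux

open SemiInf

variable {C : SemiInf.Ctx}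

/-- The chosen reflection associated with a root. -/
noncomputable def sRefl (C : SemiInf.Ctx) (h : C.IsRootDatum) (a : C.X) : C.W :=
  if ha : a ∈ C.roots then Classical.choose (h.isReflection a ha) else 1

lemma sRefl_apply_X (h : C.IsRootDatum) {a : C.X} (ha : a ∈ C.roots) (x : C.X) :
    sRefl C h a • x = x - C.pair (C.coroot a) x • a := by
  rw [sRefl, dif_pos ha]
  exact (Classical.choose_spec (h.isReflection a ha)).1 x

lemma sRefl_apply_Y (h : C.IsRootDatum) {a : C.X} (ha : a ∈ C.roots) (y : C.Y) :
    sRefl C h a • y = y - C.pair y a • C.coroot a := by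
  rw [sRefl, dif_pos ha]
  exact (Classical.choose_spec (h.isReflection a ha)).2 y

lemma sRefl_root (h : C.IsRootDatum) {a : C.X} (ha : a ∈ C.roots) :
    sRefl C h a • a = -a := by
  rw [sRefl_apply_X h ha, h.coroot_self a ha]
  abel

lemma neg_root (h : C.IsRootDatum) {a : C.X} (ha : a ∈ C.roots) : -a ∈ C.roots := by
  have := h.roots_stable (sRefl C h a) a ha
  rwa [sRefl_root h ha] at this

/-- Uniqueness: an element acting like the reflection of `a` equals `sRefl a`. -/
lemma eq_sRefl (h : C.IsRootDatum) {a : C.X} (ha : a ∈ C.roots) {w : C.W}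
    (hw : ∀ x : C.X, w • x = x - C.pair (C.coroot a) x • a) : w = sRefl C h a := by
  have key : ∀ x : C.X, ((sRefl C h a)⁻¹ * w) • x = x := by
    intro x
    rw [mul_smul, hw x, ← sRefl_apply_X h ha, inv_smul_smul]
  have := h.faithful_X _ key
  exact (inv_mul_eq_one.1 this).symm

lemma sRefl_invol (h : C.IsRootDatum) (a : C.X) :
    sRefl C h a * sRefl C h a = 1 := by
  by_cases ha : a ∈ C.roots
  · apply h.faithful_X
    intro x
    rw [mul_smul, sRefl_apply_X h ha, sRefl_apply_X h ha, map_sub, map_zsmul,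
      h.coroot_self a ha]
    rw [sub_smul]
    have : ((C.pair (C.coroot a)) x • (2:ℤ)) • a = (C.pair (C.coroot a)) x • a
        + (C.pair (C.coroot a)) x • a := by
      rw [smul_eq_mul, mul_comm, mul_smul, two_zsmul]
    rw [this]
    abel
  · rw [sRefl, dif_neg ha, one_mul]

lemma sRefl_inv (h : C.IsRootDatum) (a : C.X) :
    (sRefl C h a)⁻¹ = sRefl C h a :=
  inv_eq_of_mul_eq_one_right (sRefl_invol h a)

lemma coroot_neg (h : C.IsRootDatum) {a : C.X} (ha : a ∈ C.roots) :
    C.coroot (-a) = -C.coroot a := by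
  have h1 := h.smul_coroot (sRefl C h a) a ha
  rw [sRefl_root h ha] at h1
  rw [← h1, sRefl_apply_Y h ha, h.coroot_self a ha]
  abel

lemma sRefl_neg (h : C.IsRootDatum) {a : C.X} (ha : a ∈ C.roots) :
    sRefl C h (-a) = sRefl C h a := by
  symm
  apply eq_sRefl h (neg_root h ha)
  intro x
  rw [sRefl_apply_X h ha, coroot_neg h ha, map_neg, AddMonoidHom.neg_apply,
    neg_zsmul, smul_neg, neg_neg]

lemma act_zsmul (w : C.W) (n : ℤ) (x : C.X) : w • (n • x) = n • (w • x) :=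
  map_zsmul (DistribMulAction.toAddMonoidHom C.X w) n x

lemma actY_zsmul (w : C.W) (n : ℤ) (y : C.Y) : w • (n • y) = n • (w • y) :=
  map_zsmul (DistribMulAction.toAddMonoidHom C.Y w) n y

lemma pair_smul_left (h : C.IsRootDatum) (w : C.W) (y : C.Y) (x : C.X) :
    C.pair (w • y) x = C.pair y (w⁻¹ • x) := by
  have := h.pair_inv w⁻¹ (w • y) x
  rw [inv_smul_smul] at this
  exact this.symm

lemma pair_smul_right (h : C.IsRootDatum) (w : C.W) (y : C.Y) (x : C.X) :
    C.pair y (w • x) = C.pair (w⁻¹ • y) x := by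
  have := h.pair_inv w⁻¹ y (w • x)
  rw [inv_smul_smul] at this
  exact this.symm

lemma sRefl_conj (h : C.IsRootDatum) (w : C.W) {a : C.X} (ha : a ∈ C.roots) :
    w * sRefl C h a * w⁻¹ = sRefl C h (w • a) := by
  apply eq_sRefl h (h.roots_stable w a ha)
  intro x
  rw [mul_smul, mul_smul, sRefl_apply_X h ha, smul_sub, smul_smul,
    mul_inv_cancel, one_smul, ← h.smul_coroot w a ha, pair_smul_left h,
    act_zsmul]

lemma exists_form (C : SemiInf.Ctx) (h : C.IsRootDatum) :
    ∃ B : C.X → C.X → ℤ,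
      (∀ x y, B x y = B y x) ∧
      (∀ x x' y, B (x + x') y = B x y + B x' y) ∧
      (∀ (w : C.W) x y, B (w • x) (w • y) = B x y) ∧
      (∀ x, 0 ≤ B x x) ∧
      (∀ x, B x x = 0 → x = 0) := by
  letI := h.free_X
  letI := h.finite_X
  let b := Module.Free.chooseBasis ℤ C.X
  refine ⟨fun x y => ∑ w : C.W, ∑ i, b.repr (w • x) i * b.repr (w • y) i,
    ?_, ?_, ?_, ?_, ?_⟩
  · intro x y
    refine Finset.sum_congr rfl fun w _ => Finset.sum_congr rfl fun i _ => mul_comm _ _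
  · intro x x' y
    rw [← Finset.sum_add_distrib]
    refine Finset.sum_congr rfl fun w _ => ?_
    rw [← Finset.sum_add_distrib]
    refine Finset.sum_congr rfl fun i _ => ?_
    rw [smul_add, map_add, Finsupp.add_apply, add_mul]
  · intro v x y
    refine Fintype.sum_equiv (Equiv.mulRight v) _ _ fun w => ?_
    simp only [Equiv.coe_mulRight, mul_smul]
  · intro x
    refine Finset.sum_nonneg fun w _ => Finset.sum_nonneg fun i _ => mul_self_nonneg _
  · intro x hx
    have hterm : ∀ w ∈ (Finset.univ : Finset C.W),
        (0:ℤ) ≤ ∑ i, b.repr (w • x) i * b.repr (w • x) i :=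
      fun w _ => Finset.sum_nonneg fun i _ => mul_self_nonneg _
    have h1 : ∑ i, b.repr ((1:C.W) • x) i * b.repr ((1:C.W) • x) i = 0 := by
      have := (Finset.sum_eq_zero_iff_of_nonneg hterm).1 hx (1:C.W) (Finset.mem_univ _)
      exact this
    rw [one_smul] at h1
    have hcoord : ∀ i, b.repr x i = 0 := by
      intro i
      have h2 := (Finset.sum_eq_zero_iff_of_nonneg
        (fun i _ => mul_self_nonneg (b.repr x i))).1 h1 i (Finset.mem_univ _)
      exact mul_self_eq_zero.1 h2
    have : b.repr x = 0 := Finsupp.ext fun i => hcoord i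
    have := congrArg b.repr.symm this
    rwa [b.repr.symm_apply_apply, map_zero] at this

/-- A chosen invariant positive-definite symmetric form. -/
noncomputable def myB (C : SemiInf.Ctx) (h : C.IsRootDatum) : C.X → C.X → ℤ :=
  Classical.choose (exists_form C h)

lemma myB_symm (h : C.IsRootDatum) (x y : C.X) : myB C h x y = myB C h y x :=
  (Classical.choose_spec (exists_form C h)).1 x y

lemma myB_add_left (h : C.IsRootDatum) (x x' y : C.X) :
    myB C h (x + x') y = myB C h x y + myB C h x' y :=
  (Classical.choose_spec (exists_form C h)).2.1 x x' y

lemma myB_inv (h : C.IsRootDatum) (w : C.W) (x y : C.X) :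
    myB C h (w • x) (w • y) = myB C h x y :=
  (Classical.choose_spec (exists_form C h)).2.2.1 w x y

lemma myB_nonneg (h : C.IsRootDatum) (x : C.X) : 0 ≤ myB C h x x :=
  (Classical.choose_spec (exists_form C h)).2.2.2.1 x

lemma myB_definite (h : C.IsRootDatum) (x : C.X) : myB C h x x = 0 → x = 0 :=
  (Classical.choose_spec (exists_form C h)).2.2.2.2 x

/-- `myB x · ` as an `AddMonoidHom`. -/
noncomputable def myBhom (C : SemiInf.Ctx) (h : C.IsRootDatum) (y : C.X) : C.X →+ ℤ :=
  AddMonoidHom.mk' (fun x => myB C h x y) (fun x x' => myB_add_left h x x' y)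

lemma myB_zsmul_left (h : C.IsRootDatum) (n : ℤ) (x y : C.X) :
    myB C h (n • x) y = n * myB C h x y :=
  map_zsmul (myBhom C h y) n x

lemma myB_zsmul_right (h : C.IsRootDatum) (n : ℤ) (x y : C.X) :
    myB C h x (n • y) = n * myB C h x y := by
  rw [myB_symm h, myB_zsmul_left, myB_symm h]

lemma myB_neg_left (h : C.IsRootDatum) (x y : C.X) :
    myB C h (-x) y = -myB C h x y := map_neg (myBhom C h y) x

lemma myB_sub_left (h : C.IsRootDatum) (x x' y : C.X) :
    myB C h (x - x') y = myB C h x y - myB C h x' y := map_sub (myBhom C h y) x x'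

lemma myB_neg_right (h : C.IsRootDatum) (x y : C.X) :
    myB C h x (-y) = -myB C h x y := by
  rw [myB_symm h, myB_neg_left, myB_symm h]

lemma myB_pos (h : C.IsRootDatum) {x : C.X} (hx : x ≠ 0) : 0 < myB C h x x :=
  lt_of_le_of_ne (myB_nonneg h x) fun e => hx (myB_definite h x e.symm)

/-- The key compatibility: `⟨α∨, x⟩ B(α,α) = 2 B(x,α)`. -/
lemma pair_coroot_myB (h : C.IsRootDatum) {a : C.X} (ha : a ∈ C.roots) (x : C.X) :
    C.pair (C.coroot a) x * myB C h a a = 2 * myB C h x a := by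
  have h1 : myB C h (sRefl C h a • x) (sRefl C h a • a) = myB C h x a := myB_inv h _ x a
  rw [sRefl_apply_X h ha, sRefl_root h ha, myB_neg_right, myB_sub_left,
    myB_zsmul_left] at h1
  linarith [h1]

/-- A chosen regular element of `Y`. -/
noncomputable def eta (C : SemiInf.Ctx) (h : C.IsRootDatum) : C.Y :=
  Classical.choose h.exists_regular_Y

/-- Height of an element of `X`. -/
noncomputable def hgt (C : SemiInf.Ctx) (h : C.IsRootDatum) (x : C.X) : ℤ :=
  C.pair (eta C h) x

lemma hgt_pos (h : C.IsRootDatum) {a : C.X} (ha : a ∈ C.pos) : 0 < hgt C h a :=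
  Classical.choose_spec h.exists_regular_Y a ha

lemma hgt_add (h : C.IsRootDatum) (x y : C.X) :
    hgt C h (x + y) = hgt C h x + hgt C h y := map_add (C.pair (eta C h)) x y

lemma root_ne_zero (h : C.IsRootDatum) {a : C.X} (ha : a ∈ C.roots) : a ≠ 0 :=
  fun e => h.zero_not_root (e ▸ ha)

lemma neg_of_not_pos (h : C.IsRootDatum) {a : C.X} (ha : a ∈ C.roots)
    (hnp : a ∉ C.pos) : -a ∈ C.pos := (h.root_decomp a ha).resolve_left hnp

lemma pos_of_hgt_pos (h : C.IsRootDatum) {a : C.X} (ha : a ∈ C.roots)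
    (hh : 0 < hgt C h a) : a ∈ C.pos := by
  by_contra hnp
  have := hgt_pos h (neg_of_not_pos h ha hnp)
  rw [show hgt C h (-a) = -hgt C h a from map_neg (C.pair (eta C h)) a] at this
  omega

lemma simple_pos {a : C.X} (ha : a ∈ C.simpleRoots) : a ∈ C.pos :=
  (Finset.mem_filter.1 ha).1

lemma simple_root (h : C.IsRootDatum) {a : C.X} (ha : a ∈ C.simpleRoots) :
    a ∈ C.roots := h.pos_subset (simple_pos ha)

lemma simple_not_sum {a : C.X} (ha : a ∈ C.simpleRoots) :
    ¬ ∃ b ∈ C.pos, ∃ c ∈ C.pos, a = b + c := (Finset.mem_filter.1 ha).2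

lemma decomp_aux (h : C.IsRootDatum) :
    ∀ n : ℕ, ∀ a ∈ C.pos, (hgt C h a).toNat ≤ n →
      ∃ m : Multiset C.X, (∀ γ ∈ m, γ ∈ C.simpleRoots) ∧ m.sum = a := by
  intro n
  induction n with
  | zero =>
    intro a ha hn
    have := hgt_pos h ha
    omega
  | succ n ih =>
    intro a ha hn
    by_cases hs : a ∈ C.simpleRoots
    · exact ⟨{a}, by simpa using hs, by simp⟩
    · have : ∃ b ∈ C.pos, ∃ c ∈ C.pos, a = b + c := by
        by_contra hno
        exact hs (Finset.mem_filter.2 ⟨ha, hno⟩)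
      obtain ⟨b, hb, c, hc, rfl⟩ := this
      have hb' := hgt_pos h hb
      have hc' := hgt_pos h hc
      have hsum := hgt_add h b c
      obtain ⟨m1, hm1, hs1⟩ := ih b hb (by omega)
      obtain ⟨m2, hm2, hs2⟩ := ih c hc (by omega)
      refine ⟨m1 + m2, ?_, by rw [Multiset.sum_add, hs1, hs2]⟩
      intro γ hγ
      rcases Multiset.mem_add.1 hγ with h' | h'
      · exact hm1 γ h'
      · exact hm2 γ h'

lemma decomp (h : C.IsRootDatum) {a : C.X} (ha : a ∈ C.pos) :
    ∃ m : Multiset C.X, (∀ γ ∈ m, γ ∈ C.simpleRoots) ∧ m.sum = a :=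
  decomp_aux h (hgt C h a).toNat a ha le_rfl

lemma myB_sub_right (h : C.IsRootDatum) (x y y' : C.X) :
    myB C h x (y - y') = myB C h x y - myB C h x y' := by
  rw [myB_symm h, myB_sub_left, myB_symm h y x, myB_symm h y' x]

lemma torsion_free (h : C.IsRootDatum) {n : ℤ} (hn : n ≠ 0) {x : C.X}
    (e : n • x = 0) : x = 0 := by
  have hz : myB C h 0 0 = 0 := by
    have := myB_zsmul_left h 0 (0 : C.X) (0 : C.X)
    simpa using this
  have h0 : myB C h (n • x) (n • x) = 0 := by rw [e, hz]
  rw [myB_zsmul_left, myB_zsmul_right] at h0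
  have : myB C h x x = 0 := by
    rcases mul_eq_zero.1 h0 with h' | h'
    · exact absurd h' hn
    · rcases mul_eq_zero.1 h' with h'' | h''
      · exact absurd h'' hn
      · exact h''
  exact myB_definite h x this

lemma myB_cs (h : C.IsRootDatum) (x y : C.X) (hx : x ≠ 0) :
    myB C h x y * myB C h x y ≤ myB C h x x * myB C h y y := by
  have ha : 0 < myB C h x x := myB_pos h hx
  have expand : myB C h (myB C h x x • y - myB C h x y • x)
      (myB C h x x • y - myB C h x y • x)
      = myB C h x x * (myB C h x x * myB C h y y - myB C h x y * myB C h x y) := by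
    simp only [myB_sub_left, myB_sub_right, myB_zsmul_left, myB_zsmul_right,
      myB_symm h y x]
    ring
  have hnn := myB_nonneg h (myB C h x x • y - myB C h x y • x)
  rw [expand] at hnn
  nlinarith

lemma diff_not_root (h : C.IsRootDatum) {a b : C.X} (ha : a ∈ C.simpleRoots)
    (hb : b ∈ C.simpleRoots) (hab : a ≠ b) : b - a ∉ C.roots := by
  intro hd
  by_cases hp : b - a ∈ C.pos
  · exact simple_not_sum hb ⟨a, simple_pos ha, b - a, hp, by abel⟩
  · have hneg : a - b ∈ C.pos := by
      have := neg_of_not_pos h hd hp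
      rwa [neg_sub] at this
    exact simple_not_sum ha ⟨b, simple_pos hb, a - b, hneg, by abel⟩

lemma obtuse (h : C.IsRootDatum) {a b : C.X} (ha : a ∈ C.simpleRoots)
    (hb : b ∈ C.simpleRoots) (hab : a ≠ b) : C.pair (C.coroot a) b ≤ 0 := by
  by_contra hc
  push_neg at hc
  have haR := simple_root h ha
  have hbR := simple_root h hb
  have hBaa : 0 < myB C h a a := myB_pos h (root_ne_zero h haR)
  have hBbb : 0 < myB C h b b := myB_pos h (root_ne_zero h hbR)
  have key1 := pair_coroot_myB h haR b
  have key2 := pair_coroot_myB h hbR a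
  rw [myB_symm h b a] at key1
  have hd : 0 < myB C h a b := by nlinarith
  have hc' : 0 < C.pair (C.coroot b) a := by nlinarith
  -- case c = 1
  by_cases hc1 : C.pair (C.coroot a) b = 1
  · have : sRefl C h a • b = b - a := by
      rw [sRefl_apply_X h haR, hc1, one_smul]
    exact diff_not_root h ha hb hab (this ▸ h.roots_stable _ b hbR)
  by_cases hc1' : C.pair (C.coroot b) a = 1
  · have : sRefl C h b • a = a - b := by
      rw [sRefl_apply_X h hbR, hc1', one_smul]
    have h3 : a - b ∈ C.roots := this ▸ h.roots_stable _ a haR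
    have h4 : -(a - b) ∈ C.roots := neg_root h h3
    rw [neg_sub] at h4
    exact diff_not_root h ha hb hab h4
  -- both ≥ 2
  have hge : 2 ≤ C.pair (C.coroot a) b ∧ 2 ≤ C.pair (C.coroot b) a := by omega
  have hcs := myB_cs h a b (root_ne_zero h haR)
  have hBB : 0 < myB C h a a * myB C h b b := mul_pos hBaa hBbb
  have hprod : (C.pair (C.coroot a) b) * (C.pair (C.coroot b) a)
      * (myB C h a a * myB C h b b) = 4 * (myB C h a b * myB C h a b) := by
    linear_combination (C.pair (C.coroot b) a * myB C h b b) * key1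
      + (2 * myB C h a b) * key2
  have hle4 : (C.pair (C.coroot a) b) * (C.pair (C.coroot b) a) ≤ 4 := by
    nlinarith
  have h2 : C.pair (C.coroot a) b = 2 ∧ C.pair (C.coroot b) a = 2 := by
    constructor <;> nlinarith [hge.1, hge.2]
  have hda : myB C h a b = myB C h a a := by
    have := key1; rw [h2.1] at this; linarith
  have hdb : myB C h a b = myB C h b b := by
    have := key2; rw [h2.2] at this; linarith
  have : myB C h (b - a) (b - a) = 0 := by
    rw [myB_sub_left, myB_sub_right, myB_sub_right, myB_symm h b a]
    linarith
  have hba := myB_definite h _ this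
  exact hab (sub_eq_zero.1 hba).symm

lemma myB_sum_left (h : C.IsRootDatum) {ι : Type*} (s : Finset ι) (f : ι → C.X)
    (y : C.X) : myB C h (∑ i ∈ s, f i) y = ∑ i ∈ s, myB C h (f i) y :=
  map_sum (myBhom C h y) f s

lemma hgt_sum (h : C.IsRootDatum) {ι : Type*} (s : Finset ι) (f : ι → C.X) :
    hgt C h (∑ i ∈ s, f i) = ∑ i ∈ s, hgt C h (f i) :=
  map_sum (C.pair (eta C h)) f s

lemma hgt_zsmul (h : C.IsRootDatum) (n : ℤ) (x : C.X) :
    hgt C h (n • x) = n * hgt C h x := map_zsmul (C.pair (eta C h)) n x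

lemma hgt_sub (h : C.IsRootDatum) (x y : C.X) :
    hgt C h (x - y) = hgt C h x - hgt C h y := map_sub (C.pair (eta C h)) x y

lemma hgt_zero (h : C.IsRootDatum) : hgt C h (0 : C.X) = 0 :=
  map_zero (C.pair (eta C h))

lemma multiset_sum_count (s : Finset C.X) (m : Multiset C.X)
    (hm : ∀ γ ∈ m, γ ∈ s) : m.sum = ∑ δ ∈ s, m.count δ • δ := by
  induction m using Multiset.induction_on with
  | empty => simp
  | cons a m ih =>
    have ha : a ∈ s := hm a (Multiset.mem_cons_self a m)
    rw [Multiset.sum_cons, ih (fun γ hγ => hm γ (Multiset.mem_cons_of_mem hγ))]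
    have hterm : ∀ δ ∈ s, (a ::ₘ m).count δ • δ
        = (if δ = a then δ else 0) + m.count δ • δ := by
      intro δ _
      rw [Multiset.count_cons]
      by_cases e : δ = a
      · simp [e, add_smul, add_comm]
      · simp [e]
    rw [Finset.sum_congr rfl hterm, Finset.sum_add_distrib,
      Finset.sum_ite_eq' s a (fun δ => δ), if_pos ha]

lemma msum_count (m : Multiset C.X) (hm : ∀ γ ∈ m, γ ∈ C.simpleRoots) :
    ∑ δ ∈ C.simpleRoots, (m.count δ : ℤ) • δ = m.sum := by
  have h1 : ∀ δ ∈ C.simpleRoots, (m.count δ : ℤ) • δ = m.count δ • δ :=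
    fun δ _ => natCast_zsmul _ _
  rw [Finset.sum_congr rfl h1, ← multiset_sum_count C.simpleRoots m hm]

lemma simple_indep (h : C.IsRootDatum) (c : C.X → ℤ)
    (hc : ∑ δ ∈ C.simpleRoots, c δ • δ = 0) : ∀ δ ∈ C.simpleRoots, c δ = 0 := by
  classical
  set Δ := C.simpleRoots with hΔ
  set P := Δ.filter (fun δ => 0 < c δ) with hP
  set N := Δ.filter (fun δ => c δ < 0) with hN
  set x := ∑ δ ∈ P, c δ • δ with hx
  have hsplit := Finset.sum_filter_add_sum_filter_not Δ (fun δ => 0 < c δ)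
    (fun δ => c δ • δ)
  rw [hc] at hsplit
  have hrest : ∑ δ ∈ Δ.filter (fun δ => ¬ 0 < c δ), c δ • δ = ∑ δ ∈ N, c δ • δ := by
    symm
    apply Finset.sum_subset
    · intro δ hδ
      rw [hN, Finset.mem_filter] at hδ
      rw [Finset.mem_filter]
      exact ⟨hδ.1, by omega⟩
    · intro δ hδ h2
      rw [Finset.mem_filter] at hδ
      rw [hN, Finset.mem_filter] at h2
      have : c δ = 0 := by
        rcases hδ with ⟨h3, h4⟩
        by_contra h5
        exact h2 ⟨h3, by omega⟩
      rw [this, zero_smul]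
  rw [hrest] at hsplit
  have hx2 : x = ∑ δ ∈ N, (-c δ) • δ := by
    have : x + ∑ δ ∈ N, c δ • δ = 0 := hsplit
    have h2 : ∑ δ ∈ N, (-c δ) • δ = -∑ δ ∈ N, c δ • δ := by
      rw [← Finset.sum_neg_distrib]
      exact Finset.sum_congr rfl fun δ _ => neg_zsmul _ _
    rw [h2]
    exact eq_neg_of_add_eq_zero_left hsplit
  -- compute B x x as a double sum with nonpositive terms
  have hBout : myB C h x x = ∑ δ ∈ P, c δ * myB C h δ x := by
    conv_lhs => rw [hx]
    rw [myB_sum_left h]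
    exact Finset.sum_congr rfl fun δ _ => myB_zsmul_left h _ _ _
  have hBin : ∀ δ, myB C h δ x = ∑ ε ∈ N, (-c ε) * myB C h δ ε := by
    intro δ
    rw [hx2, myB_symm h, myB_sum_left h]
    exact Finset.sum_congr rfl fun ε _ => by
      rw [myB_zsmul_left h, myB_symm h ε δ]
  have hterm : ∀ δ ∈ P, ∀ ε ∈ N, myB C h δ ε ≤ 0 := by
    intro δ hδ ε hε
    rw [hP, Finset.mem_filter] at hδ
    rw [hN, Finset.mem_filter] at hε
    have hne : δ ≠ ε := fun e => by rw [e] at hδ; omega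
    have hob := obtuse h hδ.1 hε.1 hne
    have hkey := pair_coroot_myB h (simple_root h hδ.1) ε
    rw [myB_symm h ε δ] at hkey
    have hBδδ : 0 < myB C h δ δ := myB_pos h (root_ne_zero h (simple_root h hδ.1))
    nlinarith
  have hBle : myB C h x x ≤ 0 := by
    rw [hBout]
    apply Finset.sum_nonpos
    intro δ hδ
    rw [hBin δ]
    rw [Finset.mul_sum]
    apply Finset.sum_nonpos
    intro ε hε
    have hcδ : 0 < c δ := (Finset.mem_filter.1 hδ).2
    have hcε : c ε < 0 := (Finset.mem_filter.1 hε).2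
    have hB := hterm δ hδ ε hε
    have h1 : -c ε * myB C h δ ε ≤ 0 :=
      mul_nonpos_of_nonneg_of_nonpos (by omega) hB
    exact mul_nonpos_of_nonneg_of_nonpos (by omega) h1
  have hx0 : x = 0 := myB_definite h x (le_antisymm hBle (myB_nonneg h x))
  -- conclude P and N are empty via heights
  have hPempty : ∀ δ ∈ P, False := by
    intro δ0 hδ0
    have hgt0 : hgt C h x = ∑ δ ∈ P, c δ * hgt C h δ := by
      conv_lhs => rw [hx]
      rw [hgt_sum h]
      exact Finset.sum_congr rfl fun δ _ => hgt_zsmul h _ _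
    rw [hx0, hgt_zero h] at hgt0
    have hpos : 0 < ∑ δ ∈ P, c δ * hgt C h δ := by
      apply Finset.sum_pos'
      · intro δ hδ
        have h1 : 0 < c δ := (Finset.mem_filter.1 hδ).2
        have h2 := hgt_pos h (simple_pos (C := C) (Finset.mem_filter.1 hδ).1)
        positivity
      · refine ⟨δ0, hδ0, ?_⟩
        have h1 : 0 < c δ0 := (Finset.mem_filter.1 hδ0).2
        have h2 := hgt_pos h (simple_pos (C := C) (Finset.mem_filter.1 hδ0).1)
        positivity
    omega
  have hNempty : ∀ δ ∈ N, False := by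
    intro δ0 hδ0
    have hgt0 : hgt C h x = ∑ δ ∈ N, (-c δ) * hgt C h δ := by
      rw [hx2, hgt_sum h]
      exact Finset.sum_congr rfl fun δ _ => hgt_zsmul h _ _
    rw [hx0, hgt_zero h] at hgt0
    have hpos : 0 < ∑ δ ∈ N, (-c δ) * hgt C h δ := by
      apply Finset.sum_pos'
      · intro δ hδ
        have h1 : c δ < 0 := (Finset.mem_filter.1 hδ).2
        have h2 := hgt_pos h (simple_pos (C := C) (Finset.mem_filter.1 hδ).1)
        nlinarith
      · refine ⟨δ0, hδ0, ?_⟩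
        have h1 : c δ0 < 0 := (Finset.mem_filter.1 hδ0).2
        have h2 := hgt_pos h (simple_pos (C := C) (Finset.mem_filter.1 hδ0).1)
        nlinarith
    omega
  intro δ hδ
  by_contra hne
  rcases lt_or_gt_of_ne hne with h1 | h1
  · exact hNempty δ (Finset.mem_filter.2 ⟨hδ, h1⟩)
  · exact hPempty δ (Finset.mem_filter.2 ⟨hδ, h1⟩)

/-- Key lemma: a simple reflection permutes the positive roots other than
its own root. -/
lemma simple_refl_pos (h : C.IsRootDatum) {a b : C.X} (ha : a ∈ C.simpleRoots)
    (hb : b ∈ C.pos) (hba : b ≠ a) : sRefl C h a • b ∈ C.pos := by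
  have haR := simple_root h ha
  have hbR := h.pos_subset hb
  have hsb : sRefl C h a • b = b - C.pair (C.coroot a) b • a := sRefl_apply_X h haR b
  have hroot : sRefl C h a • b ∈ C.roots := h.roots_stable _ b hbR
  by_contra hnp
  have hγ : C.pair (C.coroot a) b • a - b ∈ C.pos := by
    have := neg_of_not_pos h hroot hnp
    rw [hsb, neg_sub] at this
    exact this
  obtain ⟨m1, hm1, hs1⟩ := decomp h hb
  obtain ⟨m2, hm2, hs2⟩ := decomp h hγ
  set c := C.pair (C.coroot a) b with hc
  have hsum : ∑ δ ∈ C.simpleRoots,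
      ((m1.count δ : ℤ) + (m2.count δ : ℤ) - (if δ = a then c else 0)) • δ = 0 := by
    have hexp : ∀ δ ∈ C.simpleRoots,
        ((m1.count δ : ℤ) + (m2.count δ : ℤ) - (if δ = a then c else 0)) • δ
        = (m1.count δ : ℤ) • δ + (m2.count δ : ℤ) • δ
          - (if δ = a then c • δ else 0) := by
      intro δ _
      rw [sub_smul, add_smul]
      congr 1
      split <;> simp
    rw [Finset.sum_congr rfl hexp, Finset.sum_sub_distrib, Finset.sum_add_distrib,
      msum_count m1 hm1, msum_count m2 hm2,
      Finset.sum_ite_eq' C.simpleRoots a (fun δ => c • δ), if_pos ha, hs1, hs2]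
    abel
  have hall := simple_indep h _ hsum
  -- m1 contains a simple root different from a
  have hex : ∃ δ0, δ0 ∈ m1 ∧ δ0 ≠ a := by
    by_contra hno
    push_neg at hno
    have : m1 = Multiset.replicate (Multiset.card m1) a :=
      Multiset.eq_replicate.2 ⟨rfl, fun γ hγ' => hno γ hγ'⟩
    have hbsum : b = (Multiset.card m1 : ℤ) • a := by
      conv_lhs => rw [← hs1, this, Multiset.sum_replicate]
      rw [natCast_zsmul]
    have := h.reduced a haR (Multiset.card m1 : ℤ) (by rw [← hbsum]; exact hbR)
    have hcard1 : (Multiset.card m1 : ℤ) = 1 := by omega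
    apply hba
    rw [hbsum, hcard1, one_smul]
  obtain ⟨δ0, hδ0m, hδ0a⟩ := hex
  have hδ0Δ : δ0 ∈ C.simpleRoots := hm1 δ0 hδ0m
  have := hall δ0 hδ0Δ
  rw [if_neg hδ0a] at this
  have hcount : 0 < m1.count δ0 := Multiset.count_pos.2 hδ0m
  omega

/-- A word in the chosen simple reflections. -/
def IsWord (h : C.IsRootDatum) (L : List C.W) : Prop :=
  ∀ g ∈ L, ∃ δ ∈ C.simpleRoots, g = sRefl C h δ

lemma sRefl_smul_smul (h : C.IsRootDatum) (a : C.X) (x : C.X) :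
    sRefl C h a • sRefl C h a • x = x := by
  rw [← mul_smul, sRefl_invol h a, one_smul]

/-- The exchange lemma. -/
lemma exchange (h : C.IsRootDatum) : ∀ L : List C.W, IsWord h L →
    ∀ b ∈ C.simpleRoots, L.prod • b ∉ C.pos →
    ∃ L1 L2 : List C.W, IsWord h (L1 ++ L2) ∧
      (L1 ++ L2).length + 1 = L.length ∧
      L.prod * sRefl C h b = (L1 ++ L2).prod := by
  intro L
  induction L with
  | nil =>
    intro _ b hb hnp
    rw [List.prod_nil, one_smul] at hnp
    exact absurd (simple_pos hb) hnp
  | cons g L ih =>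
    intro hL b hb hnp
    obtain ⟨δ, hδ, rfl⟩ := hL g List.mem_cons_self
    have hLtail : IsWord h L := fun g' hg' => hL g' (List.mem_cons_of_mem _ hg')
    rw [List.prod_cons, mul_smul] at hnp
    by_cases hcase : L.prod • b ∈ C.pos
    · have heq : L.prod • b = δ := by
        by_contra hne
        exact hnp (simple_refl_pos h hδ hcase hne)
      have hconj := sRefl_conj h L.prod (simple_root h hb)
      rw [heq] at hconj
      refine ⟨L, [], by simpa using hLtail, by simp, ?_⟩
      rw [List.prod_cons, List.append_nil, ← hconj, inv_mul_cancel_right,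
        mul_assoc, sRefl_invol h b, mul_one]
    · obtain ⟨L1, L2, hmem, hlen, hprod⟩ := ih hLtail b hb hcase
      refine ⟨sRefl C h δ :: L1, L2, ?_, ?_, ?_⟩
      · intro g' hg'
        rcases List.mem_cons.1 hg' with h' | h'
        · exact ⟨δ, hδ, h'⟩
        · exact hmem g' h'
      · simp only [List.cons_append, List.length_cons]
        omega
      · rw [List.prod_cons, List.cons_append, List.prod_cons, mul_assoc, hprod]

/-- Every reflection at a positive root is a product of simple reflections. -/
lemma refl_word_aux (h : C.IsRootDatum) : ∀ n : ℕ, ∀ b ∈ C.pos,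
    (hgt C h b).toNat ≤ n → ∃ L : List C.W, IsWord h L ∧ L.prod = sRefl C h b := by
  intro n
  induction n with
  | zero =>
    intro b hb hn
    have := hgt_pos h hb
    omega
  | succ n ih =>
    intro b hb hn
    by_cases hbs : b ∈ C.simpleRoots
    · exact ⟨[sRefl C h b], fun g hg => ⟨b, hbs, by simpa using hg⟩, by simp⟩
    have hbR := h.pos_subset hb
    obtain ⟨m, hm, hs⟩ := decomp h hb
    -- find γ in m with positive pairing against b
    have h2 : ((m.map (C.pair (C.coroot b))).sum : ℤ) = 2 := by
      rw [← AddMonoidHom.map_multiset_sum, hs]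
      exact h.coroot_self b hbR
    have hexγ : ∃ γ ∈ m, 0 < C.pair (C.coroot b) γ := by
      by_contra hno
      push_neg at hno
      have hgen : ∀ s : Multiset ℤ, (∀ x ∈ s, x ≤ 0) → s.sum ≤ 0 := by
        intro s
        induction s using Multiset.induction_on with
        | empty => simp
        | cons a t iht =>
          intro hx
          rw [Multiset.sum_cons]
          have h1 := hx a (Multiset.mem_cons_self a t)
          have h2 := iht (fun x hx' => hx x (Multiset.mem_cons_of_mem hx'))
          omega
      have : (m.map (C.pair (C.coroot b))).sum ≤ 0 := by
        apply hgen
        intro z hz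
        obtain ⟨γ, hγ, rfl⟩ := Multiset.mem_map.1 hz
        exact hno γ hγ
      omega
    obtain ⟨γ, hγm, hγpos⟩ := hexγ
    have hγΔ := hm γ hγm
    have hγR := simple_root h hγΔ
    have hbγ : b ≠ γ := fun e => hbs (e ▸ hγΔ)
    -- sign agreement
    have hcpos : 0 < C.pair (C.coroot γ) b := by
      have k1 := pair_coroot_myB h hbR γ
      have k2 := pair_coroot_myB h hγR b
      have hBbb : 0 < myB C h b b := myB_pos h (root_ne_zero h hbR)
      have hBγγ : 0 < myB C h γ γ := myB_pos h (root_ne_zero h hγR)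
      rw [myB_symm h γ b] at k1
      nlinarith
    have hb' : sRefl C h γ • b ∈ C.pos := simple_refl_pos h hγΔ hb hbγ
    have hhgt : hgt C h (sRefl C h γ • b)
        = hgt C h b - C.pair (C.coroot γ) b * hgt C h γ := by
      rw [sRefl_apply_X h hγR, hgt_sub h, hgt_zsmul h]
    have hγh := hgt_pos h (simple_pos hγΔ)
    have hbh := hgt_pos h hb
    have hb'h := hgt_pos h hb'
    have hmul : 1 ≤ C.pair (C.coroot γ) b * hgt C h γ := by nlinarith
    obtain ⟨L', hL', hprod'⟩ := ih (sRefl C h γ • b) hb' (by omega)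
    refine ⟨sRefl C h γ :: (L' ++ [sRefl C h γ]), ?_, ?_⟩
    · intro g hg
      rcases List.mem_cons.1 hg with h' | h'
      · exact ⟨γ, hγΔ, h'⟩
      rcases List.mem_append.1 h' with h'' | h''
      · exact hL' g h''
      · exact ⟨γ, hγΔ, by simpa using h''⟩
    · rw [List.prod_cons, List.prod_append, hprod', List.prod_singleton]
      have hfix : sRefl C h γ • (sRefl C h γ • b) = b := sRefl_smul_smul h γ b
      have hconj := sRefl_conj h (sRefl C h γ) (h.pos_subset hb')
      rw [hfix] at hconj
      rw [← hconj, sRefl_inv h, mul_assoc]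

lemma refl_word (h : C.IsRootDatum) {b : C.X} (hb : b ∈ C.pos) :
    ∃ L : List C.W, IsWord h L ∧ L.prod = sRefl C h b :=
  refl_word_aux h (hgt C h b).toNat b hb le_rfl

lemma word_reverse_prod (h : C.IsRootDatum) : ∀ L : List C.W, IsWord h L →
    L.reverse.prod = L.prod⁻¹ := by
  intro L
  induction L with
  | nil => simp
  | cons g L ih =>
    intro hL
    obtain ⟨δ, hδ, rfl⟩ := hL g List.mem_cons_self
    rw [List.reverse_cons, List.prod_append, List.prod_singleton, List.prod_cons,
      ih (fun g' hg' => hL g' (List.mem_cons_of_mem _ hg')), mul_inv_rev,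
      sRefl_inv h]

/-- Every element of `W` is a word in the chosen simple reflections. -/
lemma exists_word (h : C.IsRootDatum) (w : C.W) :
    ∃ L : List C.W, IsWord h L ∧ L.prod = w := by
  refine Subgroup.closure_induction ?_ ?_ ?_ ?_ (h.weyl_gen w)
  · rintro s ⟨α, hα, hsX, hsY⟩
    have hseq : s = sRefl C h α := eq_sRefl h hα hsX
    by_cases hp : α ∈ C.pos
    · obtain ⟨L, hL, hLp⟩ := refl_word h hp
      exact ⟨L, hL, by rw [hLp, hseq]⟩
    · have hneg : -α ∈ C.pos := neg_of_not_pos h hα hp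
      obtain ⟨L, hL, hLp⟩ := refl_word h hneg
      refine ⟨L, hL, ?_⟩
      rw [hLp, hseq, ← sRefl_neg h hα]
  · exact ⟨[], fun g hg => absurd hg List.not_mem_nil, rfl⟩
  · rintro x y _ _ ⟨L1, hL1, rfl⟩ ⟨L2, hL2, rfl⟩
    exact ⟨L1 ++ L2, fun g hg => (List.mem_append.1 hg).elim (hL1 g) (hL2 g),
      List.prod_append⟩
  · rintro x _ ⟨L, hL, rfl⟩
    exact ⟨L.reverse, fun g hg => hL g (List.mem_reverse.1 hg),
      word_reverse_prod h L hL⟩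

/-- Main induction: a word acting positively is trivial. -/
lemma word_pos_trivial (h : C.IsRootDatum) : ∀ n : ℕ, ∀ L : List C.W,
    L.length ≤ n → IsWord h L → (∀ b ∈ C.pos, L.prod • b ∈ C.pos) →
    L.prod = 1 := by
  intro n
  induction n with
  | zero =>
    intro L hlen _ _
    rw [List.length_eq_zero_iff.1 (Nat.le_zero.1 hlen)]
    rfl
  | succ n ih =>
    intro L hlen hL hact
    rcases L.eq_nil_or_concat with rfl | ⟨L', g, rfl⟩
    · rfl
    have hglast : g ∈ L'.concat g := by simp
    obtain ⟨a, haΔ, hga⟩ := hL g hglast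
    subst hga
    have ha := simple_pos haΔ
    have hL' : IsWord h L' := fun g' hg' => hL g' (by
      simp only [List.concat_eq_append]
      exact List.mem_append_left _ hg')
    have hprodc : (L'.concat (sRefl C h a)).prod = L'.prod * sRefl C h a := by
      rw [List.concat_eq_append, List.prod_append, List.prod_singleton]
    have hw := hact a ha
    rw [hprodc, mul_smul, sRefl_root h (simple_root h haΔ), smul_neg] at hw
    have hnp : L'.prod • a ∉ C.pos := by
      have := h.pos_neg_disjoint _ hw
      rwa [neg_neg] at this
    obtain ⟨L1, L2, hmem, hlenex, hprodex⟩ := exchange h L' hL' a haΔ hnp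
    have hlen' : (L1 ++ L2).length ≤ n := by
      have : L'.length + 1 = (L'.concat (sRefl C h a)).length := by
        simp [List.concat_eq_append]
      omega
    have heq : (L'.concat (sRefl C h a)).prod = (L1 ++ L2).prod := by
      rw [hprodc, hprodex]
    rw [heq]
    apply ih (L1 ++ L2) hlen' hmem
    intro b hb
    rw [← heq]
    exact hact b hb

/-- The fundamental theorem: an element preserving the positive roots is
trivial. -/
lemma trivial_of_pos_preserving (h : C.IsRootDatum) (u : C.W)
    (hu : ∀ b ∈ C.pos, u • b ∈ C.pos) : u = 1 := by
  obtain ⟨L, hL, rfl⟩ := exists_word h u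
  exact word_pos_trivial h L.length L le_rfl hL hu

lemma longest_inv (h : C.IsRootDatum) {w₀ : C.W} (hw : C.IsLongest w₀) :
    ∀ b ∈ C.pos, -(w₀⁻¹ • b) ∈ C.pos := by
  intro b hb
  have hroot : w₀⁻¹ • b ∈ C.roots := h.roots_stable _ b (h.pos_subset hb)
  by_cases hc : w₀⁻¹ • b ∈ C.pos
  · exfalso
    have := hw _ hc
    rw [smul_inv_smul] at this
    exact h.pos_neg_disjoint b hb this
  · exact neg_of_not_pos h hroot hc

lemma longest_unique (h : C.IsRootDatum) {u w₀ : C.W} (hu : C.IsLongest u)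
    (hw : C.IsLongest w₀) : u = w₀ := by
  have key : ∀ b ∈ C.pos, (w₀⁻¹ * u) • b ∈ C.pos := by
    intro b hb
    have h1 : -(u • b) ∈ C.pos := hu b hb
    have h2 := longest_inv h hw _ h1
    rw [smul_neg, neg_neg] at h2
    rw [mul_smul]
    exact h2
  have := trivial_of_pos_preserving h _ key
  have h2 : w₀ * (w₀⁻¹ * u) = w₀ * 1 := by rw [this]
  rwa [mul_inv_cancel_left, mul_one] at h2

section Wext

lemma t_σ_right (C : SemiInf.Ctx) (l : C.Y) (u : C.W) :
    (C.t l * C.σ u).right = u := by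
  simp [Ctx.t, Ctx.σ, SemidirectProduct.mul_right]

lemma t_σ_left (C : SemiInf.Ctx) (l : C.Y) (u : C.W) :
    (C.t l * C.σ u).left = Multiplicative.ofAdd l := by
  simp [Ctx.t, Ctx.σ, SemidirectProduct.mul_left]

lemma len_t_mul_σ (h : C.IsRootDatum) (l : C.Y) (u : C.W) :
    C.len (C.t l * C.σ u) = ∑ α ∈ C.pos,
      if u • α ∈ C.pos then (C.pair l (u • α)).natAbs
      else ((1 : ℤ) - C.pair l (u • α)).natAbs := by
  rw [Ctx.len, t_σ_right, t_σ_left]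
  refine Finset.sum_congr rfl fun α _ => ?_
  have hpair : C.pair (u⁻¹ • Multiplicative.toAdd (Multiplicative.ofAdd l)) α
      = C.pair l (u • α) := by
    have := pair_smul_left h u⁻¹ l α
    rw [inv_inv] at this
    simpa using this
  rw [hpair]

/-- Reindexing a sum over positive roots along the signed action of `u`. -/
lemma sum_reindex (h : C.IsRootDatum) (u : C.W) (f : C.X → ℕ) :
    ∑ α ∈ C.pos, f (if u • α ∈ C.pos then u • α else -(u • α))
      = ∑ β ∈ C.pos, f β := by
  refine Finset.sum_nbij' (i := fun α => if u • α ∈ C.pos then u • α else -(u • α))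
    (j := fun β => if u⁻¹ • β ∈ C.pos then u⁻¹ • β else -(u⁻¹ • β))
    ?_ ?_ ?_ ?_ ?_
  · intro α hα
    by_cases hc : u • α ∈ C.pos
    · rwa [if_pos hc]
    · rw [if_neg hc]
      exact neg_of_not_pos h (h.roots_stable u α (h.pos_subset hα)) hc
  · intro β hβ
    by_cases hc : u⁻¹ • β ∈ C.pos
    · rwa [if_pos hc]
    · rw [if_neg hc]
      exact neg_of_not_pos h (h.roots_stable u⁻¹ β (h.pos_subset hβ)) hc
  · intro α hα
    by_cases hc : u • α ∈ C.pos
    · rw [if_pos hc, if_pos (by rwa [inv_smul_smul]), inv_smul_smul]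
    · rw [if_neg hc]
      have h1 : u⁻¹ • -(u • α) = -α := by rw [smul_neg, inv_smul_smul]
      rw [if_neg (by rw [h1]; exact h.pos_neg_disjoint α hα), h1, neg_neg]
  · intro β hβ
    by_cases hc : u⁻¹ • β ∈ C.pos
    · rw [if_pos hc, if_pos (by rwa [smul_inv_smul]), smul_inv_smul]
    · rw [if_neg hc]
      have h1 : u • -(u⁻¹ • β) = -β := by rw [smul_neg, smul_inv_smul]
      rw [if_neg (by rw [h1]; exact h.pos_neg_disjoint β hβ), h1, neg_neg]
  · intro α hα
    rfl

lemma lenW_eq (C : SemiInf.Ctx) (h : C.IsRootDatum) (u : C.W) :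
    C.lenW u = ∑ α ∈ C.pos, if u • α ∈ C.pos then 0 else 1 := by
  rw [Ctx.lenW, Finset.card_filter]
  refine Finset.sum_congr rfl fun α hα => ?_
  by_cases hc : u • α ∈ C.pos
  · rw [if_neg (h.pos_neg_disjoint _ hc), if_pos hc]
  · rw [if_pos (neg_of_not_pos h (h.roots_stable u α (h.pos_subset hα)) hc),
      if_neg hc]

lemma len_formula_dom (h : C.IsRootDatum) {l : C.Y} (hl : l ∈ C.Ypos) (u : C.W) :
    C.len (C.t l * C.σ u) = (∑ β ∈ C.pos, (C.pair l β).natAbs) + C.lenW u := by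
  rw [len_t_mul_σ h, lenW_eq C h u, ← sum_reindex h u (fun β => (C.pair l β).natAbs),
    ← Finset.sum_add_distrib]
  refine Finset.sum_congr rfl fun α hα => ?_
  by_cases hc : u • α ∈ C.pos
  · rw [if_pos hc, if_pos hc, if_pos hc, add_zero]
  · rw [if_neg hc, if_neg hc, if_neg hc]
    have hneg : -(u • α) ∈ C.pos :=
      neg_of_not_pos h (h.roots_stable u α (h.pos_subset hα)) hc
    have h1 : 0 ≤ C.pair l (-(u • α)) := hl _ hneg
    have h2 : C.pair l (-(u • α)) = -C.pair l (u • α) := map_neg (C.pair l) _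
    omega

lemma len_formula_antidom (h : C.IsRootDatum) {l : C.Y} (hl : -l ∈ C.Yppos)
    (u : C.W) :
    C.len (C.t l * C.σ u) + C.lenW u = ∑ β ∈ C.pos, (C.pair l β).natAbs := by
  rw [len_t_mul_σ h, lenW_eq C h u, ← sum_reindex h u (fun β => (C.pair l β).natAbs),
    ← Finset.sum_add_distrib]
  refine Finset.sum_congr rfl fun α hα => ?_
  by_cases hc : u • α ∈ C.pos
  · rw [if_pos hc, if_pos hc, if_pos hc, add_zero]
  · rw [if_neg hc, if_neg hc, if_neg hc]
    have hneg : -(u • α) ∈ C.pos :=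
      neg_of_not_pos h (h.roots_stable u α (h.pos_subset hα)) hc
    have h1 : 0 < C.pair (-l) (-(u • α)) := hl _ hneg
    have h2 : C.pair (-l) (-(u • α)) = C.pair l (u • α) := by
      simp
    have h3 : C.pair l (-(u • α)) = -C.pair l (u • α) := map_neg (C.pair l) _
    omega

lemma lenW_one (h : C.IsRootDatum) : C.lenW (1 : C.W) = 0 := by
  rw [Ctx.lenW, Finset.card_eq_zero, Finset.filter_eq_empty_iff]
  intro α hα
  rw [one_smul]
  exact h.pos_neg_disjoint α hα

lemma lenW_le (u : C.W) : C.lenW u ≤ C.pos.card :=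
  Finset.card_filter_le _ _

lemma lenW_zero_pos (h : C.IsRootDatum) {u : C.W} (hu : C.lenW u = 0) :
    ∀ b ∈ C.pos, u • b ∈ C.pos := by
  intro b hb
  rw [Ctx.lenW, Finset.card_eq_zero, Finset.filter_eq_empty_iff] at hu
  have := hu hb
  exact (h.root_decomp _ (h.roots_stable u b (h.pos_subset hb))).resolve_right this

lemma lenW_longest (h : C.IsRootDatum) {w₀ : C.W} (hw : C.IsLongest w₀) :
    C.lenW w₀ = C.pos.card := by
  rw [Ctx.lenW]
  congr 1
  exact Finset.filter_eq_self.2 hw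

lemma longest_of_lenW (h : C.IsRootDatum) {u : C.W} (hu : C.lenW u = C.pos.card) :
    C.IsLongest u := by
  rw [Ctx.lenW] at hu
  have := Finset.eq_of_subset_of_card_le (Finset.filter_subset _ _) (le_of_eq hu.symm)
  intro α hα
  rw [← this] at hα
  exact (Finset.mem_filter.1 hα).2

end Wext

end SemiInfAux

/-- If `λ ∈ Y₊` then `t_λ` is the unique element of minimal length in the coset
`t_λ W_f`; if `λ ∈ −Y₊₊` then `t_λ w∘` is the unique element of minimal length
in the coset `t_λ W_f`, where `w∘` is the longest element of `W_f`. -/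
theorem statement5 (C : SemiInf.Ctx) (h : C.IsRootDatum) (l : C.Y) :
    (l ∈ C.Ypos →
      (∀ u : C.W, C.len (C.t l) ≤ C.len (C.t l * C.σ u)) ∧
      (∀ u : C.W,
        (∀ u' : C.W, C.len (C.t l * C.σ u) ≤ C.len (C.t l * C.σ u')) →
        C.t l * C.σ u = C.t l)) ∧
    (-l ∈ C.Yppos → ∀ w₀ : C.W, C.IsLongest w₀ →
      (∀ u : C.W, C.len (C.t l * C.σ w₀) ≤ C.len (C.t l * C.σ u)) ∧
      (∀ u : C.W,
        (∀ u' : C.W, C.len (C.t l * C.σ u) ≤ C.len (C.t l * C.σ u')) →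
        C.t l * C.σ u = C.t l * C.σ w₀)) := by
  have hσ1 : C.σ (1 : C.W) = 1 := map_one SemidirectProduct.inr
  constructor
  · intro hl
    have hK : ∀ u : C.W, C.len (C.t l * C.σ u)
        = (∑ β ∈ C.pos, (C.pair l β).natAbs) + C.lenW u :=
      SemiInfAux.len_formula_dom h hl
    have h0 : C.len (C.t l) = ∑ β ∈ C.pos, (C.pair l β).natAbs := by
      have := hK (1 : C.W)
      rwa [hσ1, mul_one, SemiInfAux.lenW_one h, add_zero] at this
    constructor
    · intro u
      rw [h0, hK u]
      omega
    · intro u hu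
      have h1 := hu (1 : C.W)
      rw [hK u, hK 1, SemiInfAux.lenW_one h] at h1
      have h2 : C.lenW u = 0 := by omega
      have h3 : u = 1 :=
        SemiInfAux.trivial_of_pos_preserving h u (SemiInfAux.lenW_zero_pos h h2)
      rw [h3, hσ1, mul_one]
  · intro hnl w₀ hw₀
    have hK : ∀ u : C.W, C.len (C.t l * C.σ u) + C.lenW u
        = ∑ β ∈ C.pos, (C.pair l β).natAbs :=
      SemiInfAux.len_formula_antidom h hnl
    have hw₀len : C.lenW w₀ = C.pos.card := SemiInfAux.lenW_longest h hw₀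
    constructor
    · intro u
      have h1 := hK u
      have h2 := hK w₀
      have h3 := SemiInfAux.lenW_le (C := C) u
      omega
    · intro u hu
      have h1 := hu w₀
      have h2 := hK u
      have h3 := hK w₀
      have h4 := SemiInfAux.lenW_le (C := C) u
      have h5 : C.lenW u = C.pos.card := by omega
      have h6 : u = w₀ :=
        SemiInfAux.longest_unique h (SemiInfAux.longest_of_lenW h h5) hw₀
      rw [h6]
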